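/- (Threshold rounding) Let n ≥ 1, q ≥ 2, let w : Fin n → Fin q → ℝ be nonnegative weights with Σ_{j ∈ Fin q} w i j = 1 for every i, let h : Fin n → Fin q, and let δ_dec ≥ 0 satisfy (1/n)·Σ_i (1 − w i (h i)) ≤ δ_dec. For i ∈ Fin n and j ∈ Fin q define the cumulative sum c i j = Σ_{j' ≤ j} w i j'. Then there exists θ ∈ [0,1) such that the word h' : Fin n → Fin q defined by h' i = the least j ∈ Fin q with θ < c i j satisfies Δ(h', h) ≤ δ_dec. -/

import Mathlib

/-- Fractional Hamming distance between two words of length `n`. -/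
noncomputable def fracDist {n q : ℕ} (f g : Fin n → Fin q) : ℝ :=
  (hammingDist f g : ℝ) / n

/-- Cumulative sums `c i j = Σ_{j' ≤ j} w i j'` of a weight collection. -/
def cumul {n q : ℕ} (w : Fin n → Fin q → ℝ) (i : Fin n) (j : Fin q) : ℝ :=
  ∑ j' ∈ Finset.univ.filter (· ≤ j), w i j'

open MeasureTheory

/-- **Threshold rounding.** If the weights `w i` are probability distributions and the
codeword `h` has expected agreement loss `𝔼_i [1 − w i (h i)] ≤ δ_dec`, then there is a
threshold `θ ∈ [0,1)` such that rounding each coordinate `i` to the least `j` with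
`θ < c i j` yields a word `h'` with `Δ(h', h) ≤ δ_dec`. -/
theorem threshold_rounding (n q : ℕ) (hn : 1 ≤ n) (hq : 2 ≤ q)
    (w : Fin n → Fin q → ℝ) (hw : ∀ i j, 0 ≤ w i j) (hw1 : ∀ i, ∑ j, w i j = 1)
    (h : Fin n → Fin q) (δdec : ℝ) (hδdec : 0 ≤ δdec)
    (hag : (1 / (n : ℝ)) * ∑ i, (1 - w i (h i)) ≤ δdec) :
    ∃ θ ∈ Set.Ico (0 : ℝ) 1, ∃ h' : Fin n → Fin q,
      (∀ i, IsLeast {j : Fin q | θ < cumul w i j} (h' i)) ∧ fracDist h' h ≤ δdec := by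
  classical
  have hn' : (0:ℝ) < n := by exact_mod_cast hn
  set p : Fin n → ℝ := fun i => ∑ j' ∈ Finset.univ.filter (· < h i), w i j' with hp
  set c : Fin n → ℝ := fun i => cumul w i (h i) with hc
  have hsplit : ∀ i, c i = p i + w i (h i) := by
    intro i
    have hins : Finset.univ.filter (· ≤ h i) = insert (h i) (Finset.univ.filter (· < h i)) := by
      ext x
      simp [le_iff_lt_or_eq, or_comm]
    rw [hc]
    simp only [cumul]
    rw [hins, Finset.sum_insert (by simp), add_comm]
  have hp0 : ∀ i, 0 ≤ p i := fun i => Finset.sum_nonneg fun j _ => hw i j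
  have hcle1 : ∀ i (j : Fin q), cumul w i j ≤ 1 := by
    intro i j
    rw [← hw1 i]
    exact Finset.sum_le_sum_of_subset_of_nonneg (Finset.filter_subset _ _)
      (fun x _ _ => hw i x)
  have hwle1 : ∀ i, w i (h i) ≤ 1 := by
    intro i
    rw [← hw1 i]
    exact Finset.single_le_sum (fun j _ => hw i j) (Finset.mem_univ _)
  -- the key rounding fact
  have hkey : ∀ i (θ : ℝ), θ ∈ Set.Ico (p i) (c i) →
      IsLeast {j : Fin q | θ < cumul w i j} (h i) := by
    intro i θ hθ
    refine ⟨hθ.2, ?_⟩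
    intro j hj
    by_contra hlt
    push_neg at hlt
    have hle : cumul w i j ≤ p i := by
      apply Finset.sum_le_sum_of_subset_of_nonneg
      · intro x hx
        simp only [Finset.mem_filter, Finset.mem_univ, true_and] at hx ⊢
        exact lt_of_le_of_lt hx hlt
      · intro x _ _; exact hw i x
    have : θ < cumul w i j := hj
    linarith [hθ.1]
  -- the last cumulative sum is 1
  have hlast : ∀ i, cumul w i ⟨q - 1, by omega⟩ = 1 := by
    intro i
    rw [← hw1 i]
    simp only [cumul]
    congr 1
    rw [Finset.filter_eq_self]
    intro j _
    have := j.isLt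
    simp only [Fin.le_def]
    omega
  -- existence of least elements for θ ∈ [0,1)
  have hex : ∀ θ ∈ Set.Ico (0:ℝ) 1, ∀ i, ∃ j, IsLeast {j : Fin q | θ < cumul w i j} j := by
    intro θ hθ i
    have hne : (Finset.univ.filter (fun j => θ < cumul w i j)).Nonempty := by
      refine ⟨⟨q - 1, by omega⟩, ?_⟩
      simp only [Finset.mem_filter, Finset.mem_univ, true_and]
      rw [hlast i]
      exact hθ.2
    refine ⟨(Finset.univ.filter (fun j => θ < cumul w i j)).min' hne, ?_, ?_⟩
    · have := Finset.min'_mem _ hne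
      simpa using this
    · intro j hj
      exact Finset.min'_le _ _ (by simpa using hj)
  -- measure-theoretic setup
  set A : Fin n → Set ℝ := fun i => Set.Ico (0:ℝ) 1 \ Set.Ico (p i) (c i) with hA
  have hsub : ∀ i, Set.Ico (p i) (c i) ⊆ Set.Ico (0:ℝ) 1 :=
    fun i => Set.Ico_subset_Ico (hp0 i) (hcle1 i (h i))
  have hmeasA : ∀ i, MeasurableSet (A i) := fun i => measurableSet_Ico.diff measurableSet_Ico
  have hcp : ∀ i, c i - p i = w i (h i) := fun i => by rw [hsplit i]; ring
  have hvol : ∀ i, volume (A i) = ENNReal.ofReal (1 - w i (h i)) := by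
    intro i
    rw [hA]
    simp only
    rw [measure_diff (hsub i) measurableSet_Ico.nullMeasurableSet
      (by rw [Real.volume_Ico]; exact ENNReal.ofReal_ne_top)]
    rw [Real.volume_Ico, Real.volume_Ico, ← ENNReal.ofReal_sub _ (by linarith [hcp i, hw i (h i)])]
    congr 1
    rw [← hcp i]
    ring
  set g : ℝ → ℝ := fun θ => ∑ i, (A i).indicator (fun _ => (1:ℝ)) θ with hg
  have hint : ∀ i, Integrable ((A i).indicator (fun _ => (1:ℝ))) := by
    intro i
    rw [integrable_indicator_iff (hmeasA i)]
    exact integrableOn_const (by rw [hvol i]; exact ENNReal.ofReal_ne_top)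
  have hgint : Integrable g := integrable_finset_sum _ fun i _ => hint i
  have hgtot : ∫ θ, g θ = ∑ i, (1 - w i (h i)) := by
    rw [hg]
    rw [integral_finset_sum _ fun i _ => hint i]
    refine Finset.sum_congr rfl fun i _ => ?_
    rw [integral_indicator_const (1:ℝ) (hmeasA i), measureReal_def, hvol i, smul_eq_mul, mul_one,
      ENNReal.toReal_ofReal (by linarith [hwle1 i])]
  by_contra hcon
  push_neg at hcon
  set m : ℕ := Nat.floor ((n:ℝ) * δdec) + 1 with hm
  have hmgt : (n:ℝ) * δdec < m := by
    rw [hm]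
    push_cast
    exact Nat.lt_floor_add_one _
  -- pointwise lower bound on g
  have hglb : ∀ θ ∈ Set.Ico (0:ℝ) 1, (m:ℝ) ≤ g θ := by
    intro θ hθ
    choose h' hh' using hex θ hθ
    have hfrac := hcon θ hθ h' hh'
    have hd : (m:ℝ) ≤ (hammingDist h' h : ℝ) := by
      have h1 : (n:ℝ) * δdec < hammingDist h' h := by
        rw [fracDist, lt_div_iff₀ hn'] at hfrac
        linarith
      have h2 : Nat.floor ((n:ℝ) * δdec) < hammingDist h' h := by
        rw [Nat.floor_lt (by positivity)]
        exact h1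
      exact_mod_cast h2
    refine hd.trans ?_
    have heq : (hammingDist h' h : ℝ) = ∑ i, (if h' i ≠ h i then (1:ℝ) else 0) := by
      rw [hammingDist, Finset.card_filter]
      push_cast
      rfl
    rw [heq, hg]
    refine Finset.sum_le_sum fun i _ => ?_
    by_cases hne : h' i ≠ h i
    · have hmem : θ ∈ A i := by
        by_contra hnotin
        have hIco : θ ∈ Set.Ico (p i) (c i) := by
          by_contra hno
          exact hnotin ⟨hθ, hno⟩
        exact hne (IsLeast.unique (hh' i) (hkey i θ hIco))
      simp [hne, Set.indicator_of_mem hmem]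
    · push_neg at hne
      simp only [hne, ne_eq, not_true_eq_false, if_neg, ite_false]
      exact Set.indicator_nonneg (fun _ _ => zero_le_one) θ
  -- integrate the lower bound
  have hvol01 : volume (Set.Ico (0:ℝ) 1) = ENNReal.ofReal 1 := by
    rw [Real.volume_Ico]; norm_num
  have h1 : (m:ℝ) * (volume (Set.Ico (0:ℝ) 1)).toReal ≤ ∫ θ in Set.Ico (0:ℝ) 1, g θ :=
    setIntegral_ge_of_const_le_real measurableSet_Ico
      (by rw [hvol01]; exact ENNReal.ofReal_ne_top) hglb hgint.integrableOn
  have h2 : ∫ θ in Set.Ico (0:ℝ) 1, g θ ≤ ∫ θ, g θ :=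
    setIntegral_le_integral hgint (ae_of_all _ fun θ =>
      Finset.sum_nonneg fun i _ => Set.indicator_nonneg (fun _ _ => zero_le_one) θ)
  have hS : ∑ i, (1 - w i (h i)) ≤ (n:ℝ) * δdec := by
    rw [one_div, inv_mul_le_iff₀ hn'] at hag
    exact hag
  rw [hvol01, ENNReal.toReal_ofReal zero_le_one, mul_one] at h1
  rw [hgtot] at h2
  linarith
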